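/- Let (Ω, 𝓐, ℙ) be a probability space, let U, V, W : Ω → ℝ be random variables with E[(V-U)²] < ∞ and E[|V-W|] < ∞ and E[|W-U|] < ∞, let y ∈ ℝ, and let φ : ℝ → ℝ be a bounded differentiable function whose derivative φ' is bounded and Lipschitz continuous with Lipschitz constant L. Then |E[e^{i y V} φ(V)]| ≤ |E[e^{i y W} (φ(U) + φ'(U)(W - U))]| + L · E[(V-U)²] + (|y| · ‖φ‖_∞ + ‖φ'‖_∞) · E[|V-W|]. -/

import Mathlib

open MeasureTheory Real Complex

/-- Taylor bound for a function with Lipschitz derivative. -/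
lemma taylor_lip_bound (φ : ℝ → ℝ) (hφ : Differentiable ℝ φ) (L : ℝ)
    (hL : ∀ x z : ℝ, |deriv φ x - deriv φ z| ≤ L * |x - z|) (a b : ℝ) :
    |φ b - φ a - deriv φ a * (b - a)| ≤ L * (b - a) ^ 2 := by
  have hL0 : 0 ≤ L := by
    have := hL 0 1
    simp at this
    nlinarith [abs_nonneg (deriv φ 0 - deriv φ 1), this]
  set g : ℝ → ℝ := fun x => φ x - deriv φ a * x with hg
  have hder : ∀ x : ℝ, HasDerivAt g (deriv φ x - deriv φ a) x := fun x => by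
    exact (((hφ x).hasDerivAt).sub ((hasDerivAt_id x).const_mul (deriv φ a))).congr_deriv (by ring)
  have key : ‖g b - g a‖ ≤ (L * |b - a|) * ‖b - a‖ := by
    apply (convex_uIcc a b).norm_image_sub_le_of_norm_hasDerivWithin_le
      (fun x _ => (hder x).hasDerivWithinAt) ?_ Set.left_mem_uIcc Set.right_mem_uIcc
    intro x hx
    calc ‖deriv φ x - deriv φ a‖ ≤ L * |x - a| := hL x a
      _ ≤ L * |b - a| := by
          exact mul_le_mul_of_nonneg_left (Set.abs_sub_left_of_mem_uIcc hx) hL0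
  have : g b - g a = φ b - φ a - deriv φ a * (b - a) := by simp [hg]; ring
  rw [this] at key
  calc |φ b - φ a - deriv φ a * (b - a)| ≤ (L * |b - a|) * ‖b - a‖ := key
    _ = L * (b - a) ^ 2 := by rw [Real.norm_eq_abs, mul_assoc, abs_mul_abs_self]; ring

/-- Lipschitz bound for `t ↦ exp(I y t)`. -/
lemma cexp_sub_bound (y v w : ℝ) :
    ‖Complex.exp (Complex.I * y * v) - Complex.exp (Complex.I * y * w)‖ ≤ |y| * |v - w| := by
  have hder : ∀ t : ℝ, HasDerivAt (fun t : ℝ => Complex.exp (Complex.I * y * t))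
      (Complex.I * y * Complex.exp (Complex.I * y * t)) t := by
    intro t
    have h1 : HasDerivAt (fun t : ℝ => (Complex.I * y) * (t : ℂ)) (Complex.I * y) t := by
      simpa using (Complex.ofRealCLM.hasDerivAt (x := t)).const_mul (Complex.I * y)
    simpa [mul_comm] using h1.cexp
  have key : ‖Complex.exp (Complex.I * y * v) - Complex.exp (Complex.I * y * w)‖
      ≤ |y| * ‖v - w‖ := by
    apply (convex_univ (𝕜 := ℝ)).norm_image_sub_le_of_norm_hasDerivWithin_le
      (fun x _ => (hder x).hasDerivWithinAt) ?_ (Set.mem_univ w) (Set.mem_univ v)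
    intro x _
    simp [norm_mul, Complex.norm_exp]
  simpa [Real.norm_eq_abs] using key

/-- Milstein-type approximation bound for characteristic integrals. For random
variables `U, V, W`, `y ∈ ℝ` and a bounded differentiable `φ` with bounded `L`-Lipschitz
derivative,
`|E[e^{iyV} φ(V)]| ≤ |E[e^{iyW}(φ(U) + φ'(U)(W-U))]| + L·E[(V-U)²] + (|y|·‖φ‖_∞ + ‖φ'‖_∞)·E[|V-W|]`. -/
theorem stmt_6 {Ω : Type*} [MeasurableSpace Ω] (P : Measure Ω) [IsProbabilityMeasure P]
    (U V W : Ω → ℝ) (hU : Measurable U) (hV : Measurable V) (hW : Measurable W)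
    (hVU : Integrable (fun ω => (V ω - U ω) ^ 2) P)
    (hVW : Integrable (fun ω => |V ω - W ω|) P)
    (hWU : Integrable (fun ω => |W ω - U ω|) P)
    (y : ℝ) (φ : ℝ → ℝ) (hφ : Differentiable ℝ φ)
    (hφb : ∃ M : ℝ, ∀ x : ℝ, |φ x| ≤ M)
    (hφ'b : ∃ M : ℝ, ∀ x : ℝ, |deriv φ x| ≤ M)
    (L : ℝ) (hL : ∀ x z : ℝ, |deriv φ x - deriv φ z| ≤ L * |x - z|) :
    ‖∫ ω, Complex.exp (Complex.I * y * V ω) * (φ (V ω) : ℂ) ∂P‖ ≤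
      ‖∫ ω, Complex.exp (Complex.I * y * W ω) *
          ((φ (U ω) : ℂ) + (Complex.ofReal (deriv φ (U ω))) * ((W ω : ℂ) - (U ω : ℂ))) ∂P‖ +
        L * (∫ ω, (V ω - U ω) ^ 2 ∂P) +
        (|y| * (⨆ x : ℝ, |φ x|) + (⨆ x : ℝ, |deriv φ x|)) * (∫ ω, |V ω - W ω| ∂P) := by
  obtain ⟨M, hM⟩ := hφb
  obtain ⟨M', hM'⟩ := hφ'b
  set Cφ : ℝ := ⨆ x : ℝ, |φ x| with hCφ
  set Cφ' : ℝ := ⨆ x : ℝ, |deriv φ x| with hCφ'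
  have hbddφ : BddAbove (Set.range fun x : ℝ => |φ x|) := ⟨M, by rintro _ ⟨x, rfl⟩; exact hM x⟩
  have hbddφ' : BddAbove (Set.range fun x : ℝ => |deriv φ x|) :=
    ⟨M', by rintro _ ⟨x, rfl⟩; exact hM' x⟩
  have hφC : ∀ x, |φ x| ≤ Cφ := fun x => le_ciSup hbddφ x
  have hφ'C : ∀ x, |deriv φ x| ≤ Cφ' := fun x => le_ciSup hbddφ' x
  have hcontφ' : Continuous (deriv φ) := by
    have : LipschitzWith (Real.toNNReal L) (deriv φ) := by
      apply LipschitzWith.of_dist_le_mul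
      intro x z
      rw [Real.dist_eq, Real.dist_eq]
      refine (hL x z).trans ?_
      exact mul_le_mul_of_nonneg_right (Real.le_coe_toNNReal L) (abs_nonneg _)
    exact this.continuous
  set f : Ω → ℂ := fun ω => Complex.exp (Complex.I * y * V ω) * (φ (V ω) : ℂ) with hf
  set g : Ω → ℂ := fun ω => Complex.exp (Complex.I * y * W ω) *
      ((φ (U ω) : ℂ) + (Complex.ofReal (deriv φ (U ω))) * ((W ω : ℂ) - (U ω : ℂ))) with hgdef
  have hmexpV : Measurable fun ω => Complex.exp (Complex.I * y * V ω) := by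
    apply Complex.measurable_exp.comp
    exact (measurable_const.mul (Complex.measurable_ofReal.comp hV))
  have hmexpW : Measurable fun ω => Complex.exp (Complex.I * y * W ω) := by
    apply Complex.measurable_exp.comp
    exact (measurable_const.mul (Complex.measurable_ofReal.comp hW))
  have hmf : Measurable f :=
    hmexpV.mul (Complex.measurable_ofReal.comp (hφ.continuous.measurable.comp hV))
  have hmg : Measurable g := by
    apply hmexpW.mul
    apply Measurable.add
    · exact Complex.measurable_ofReal.comp (hφ.continuous.measurable.comp hU)
    · exact (Complex.measurable_ofReal.comp (hcontφ'.measurable.comp hU)).mul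
        ((Complex.measurable_ofReal.comp hW).sub (Complex.measurable_ofReal.comp hU))
  have hnorm1 : ∀ r : ℝ, ‖Complex.exp (Complex.I * y * r)‖ = 1 := by
    intro r
    rw [Complex.norm_exp]
    simp
  have hif : Integrable f P := by
    apply Integrable.mono' (integrable_const M) hmf.aestronglyMeasurable
    filter_upwards with ω
    rw [hf]
    simp only [norm_mul, hnorm1, one_mul, Complex.norm_real, Real.norm_eq_abs]
    exact hM _
  have hig : Integrable g P := by
    apply Integrable.mono' ((integrable_const M).add (hWU.const_mul M'))
      hmg.aestronglyMeasurable
    filter_upwards with ω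
    rw [hgdef]
    simp only [norm_mul, hnorm1, one_mul]
    calc ‖(φ (U ω) : ℂ) + (Complex.ofReal (deriv φ (U ω))) * ((W ω : ℂ) - (U ω : ℂ))‖
        ≤ ‖(φ (U ω) : ℂ)‖ + ‖(Complex.ofReal (deriv φ (U ω)))‖ * ‖((W ω : ℂ) - (U ω : ℂ))‖ := by
          refine (norm_add_le _ _).trans ?_
          rw [norm_mul]
      _ ≤ M + M' * |W ω - U ω| := by
          push_cast
          rw [← Complex.ofReal_sub]
          simp only [Complex.norm_real, Real.norm_eq_abs]
          gcongr
          · exact hM _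
          · exact hM' _
  set b : Ω → ℝ := fun ω => L * (V ω - U ω) ^ 2 + (|y| * Cφ + Cφ') * |V ω - W ω| with hb
  have hib : Integrable b P := (hVU.const_mul L).add (hVW.const_mul _)
  have hptwise : ∀ ω, ‖f ω - g ω‖ ≤ b ω := by
    intro ω
    have hsplit : f ω - g ω =
        (Complex.exp (Complex.I * y * V ω) - Complex.exp (Complex.I * y * W ω)) * (φ (V ω) : ℂ)
        + Complex.exp (Complex.I * y * W ω) *
            (Complex.ofReal (φ (V ω) - φ (U ω) - deriv φ (U ω) * (V ω - U ω)))
        + Complex.exp (Complex.I * y * W ω) *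
            (Complex.ofReal (deriv φ (U ω)) * ((V ω : ℂ) - (W ω : ℂ))) := by
      rw [hf, hgdef]
      push_cast
      ring
    rw [hsplit]
    refine (norm_add_le _ _).trans <| (add_le_add_left (norm_add_le _ _) _).trans ?_
    rw [norm_mul, norm_mul, norm_mul, hnorm1, one_mul, one_mul]
    have h1 : ‖Complex.exp (Complex.I * y * V ω) - Complex.exp (Complex.I * y * W ω)‖
        * ‖(φ (V ω) : ℂ)‖ ≤ (|y| * |V ω - W ω|) * Cφ := by
      apply mul_le_mul (cexp_sub_bound y (V ω) (W ω)) ?_ (norm_nonneg _)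
        (by positivity)
      simpa [Complex.norm_real, Real.norm_eq_abs] using hφC (V ω)
    have h2 : ‖(Complex.ofReal (φ (V ω) - φ (U ω) - deriv φ (U ω) * (V ω - U ω)))‖
        ≤ L * (V ω - U ω) ^ 2 := by
      rw [Complex.norm_real, Real.norm_eq_abs]
      exact taylor_lip_bound φ hφ L hL (U ω) (V ω)
    have h3 : ‖Complex.ofReal (deriv φ (U ω)) * ((V ω : ℂ) - (W ω : ℂ))‖ ≤ Cφ' * |V ω - W ω| := by
      rw [norm_mul, ← Complex.ofReal_sub]
      simp only [Complex.norm_real, Real.norm_eq_abs]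
      exact mul_le_mul_of_nonneg_right (hφ'C _) (abs_nonneg _)
    show _ ≤ L * (V ω - U ω) ^ 2 + (|y| * Cφ + Cφ') * |V ω - W ω|
    nlinarith [abs_nonneg (V ω - W ω), h1, h2, h3]
  have hmain : ‖∫ ω, f ω ∂P‖ ≤ ‖∫ ω, g ω ∂P‖ + ∫ ω, b ω ∂P := by
    have h1 : ‖∫ ω, f ω ∂P - ∫ ω, g ω ∂P‖ ≤ ∫ ω, b ω ∂P := by
      rw [← integral_sub hif hig]
      exact norm_integral_le_of_norm_le hib (Filter.Eventually.of_forall hptwise)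
    calc ‖∫ ω, f ω ∂P‖ = ‖∫ ω, g ω ∂P + (∫ ω, f ω ∂P - ∫ ω, g ω ∂P)‖ := by congr 1; ring
      _ ≤ ‖∫ ω, g ω ∂P‖ + ‖∫ ω, f ω ∂P - ∫ ω, g ω ∂P‖ := norm_add_le _ _
      _ ≤ ‖∫ ω, g ω ∂P‖ + ∫ ω, b ω ∂P := by linarith
  have hbint : ∫ ω, b ω ∂P = L * (∫ ω, (V ω - U ω) ^ 2 ∂P)
      + (|y| * Cφ + Cφ') * (∫ ω, |V ω - W ω| ∂P) := by
    rw [hb]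
    rw [integral_add (hVU.const_mul L) (hVW.const_mul _), integral_const_mul, integral_const_mul]
  rw [hbint] at hmain
  linarith
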